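/- For f(x) = 1/(1+x²), the Malmquist–Takenaka coefficients satisfy ⟨f, φ_n⟩ = √(2π)·i^n·3^{−(n+1)} for n ≥ 0, where ⟨f, φ_n⟩ = ∫_{−∞}^∞ f(x)·conj(φ_n(x)) dx. -/

import Mathlib

open Complex MeasureTheory

noncomputable def MT (n : ℤ) (x : ℝ) : ℂ :=
  (Real.sqrt (2 / Real.pi) : ℂ) * I ^ n * (1 + 2 * I * x) ^ n / (1 - 2 * I * x) ^ (n + 1)

namespace MTaux

open Filter Real Topology

noncomputable def r (x : ℝ) : ℂ := (1 - 2*I*x) / (1 + 2*I*x)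
noncomputable def s (m : ℕ) (x : ℝ) : ℂ := r x ^ m / ((1 - I*x) * (1 + 2*I*x))
noncomputable def t (m : ℕ) (x : ℝ) : ℂ := r x ^ m / ((1 + I*x) * (1 + 2*I*x))
noncomputable def c (m : ℕ) (x : ℝ) : ℂ := r x ^ m / (1 + 2*I*x)^2

lemma hw (x : ℝ) : ((1:ℂ) + 2*I*x) ≠ 0 := fun h => by simpa using congrArg Complex.re h
lemma hw' (x : ℝ) : ((1:ℂ) - 2*I*x) ≠ 0 := fun h => by simpa using congrArg Complex.re h
lemma h1m (x : ℝ) : ((1:ℂ) - I*x) ≠ 0 := fun h => by simpa using congrArg Complex.re h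
lemma h1p (x : ℝ) : ((1:ℂ) + I*x) ≠ 0 := fun h => by simpa using congrArg Complex.re h

lemma hI3 : (I:ℂ)^3 = -I := by
  rw [pow_succ, Complex.I_sq]; ring

lemma hI4 : (I:ℂ)^4 = 1 := by
  rw [show (4:ℕ) = 2+2 from rfl, pow_add, Complex.I_sq]; ring

lemma norm_1m (x : ℝ) : ‖((1:ℂ) - I*x)‖ = Real.sqrt (1+x^2) := by
  rw [Complex.norm_def]; congr 1
  simp [Complex.normSq_apply]; ring

lemma norm_1p (x : ℝ) : ‖((1:ℂ) + I*x)‖ = Real.sqrt (1+x^2) := by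
  rw [Complex.norm_def]; congr 1
  simp [Complex.normSq_apply]; ring

lemma norm_w (x : ℝ) : ‖((1:ℂ) + 2*I*x)‖ = Real.sqrt (1+4*x^2) := by
  rw [Complex.norm_def]; congr 1
  simp [Complex.normSq_apply]; ring

lemma norm_w' (x : ℝ) : ‖((1:ℂ) - 2*I*x)‖ = Real.sqrt (1+4*x^2) := by
  rw [Complex.norm_def]; congr 1
  simp [Complex.normSq_apply]; ring

lemma norm_r (x : ℝ) : ‖r x‖ = 1 := by
  rw [r, norm_div, norm_w, norm_w', div_self]
  positivity

lemma s_eq (m : ℕ) (x : ℝ) : s m x = (1-2*I*x)^m / ((1-I*x) * (1+2*I*x)^(m+1)) := by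
  rw [s, r, div_pow, div_div]
  congr 1
  ring

lemma t_eq (m : ℕ) (x : ℝ) : t m x = (1-2*I*x)^m / ((1+I*x) * (1+2*I*x)^(m+1)) := by
  rw [t, r, div_pow, div_div]
  congr 1
  ring

lemma c_eq (m : ℕ) (x : ℝ) : c m x = (1-2*I*x)^m / (1+2*I*x)^(m+2) := by
  rw [c, r, div_pow, div_div]
  congr 1
  ring

lemma continuous_w : Continuous fun x : ℝ => ((1:ℂ) + 2*I*x) := by continuity
lemma continuous_w' : Continuous fun x : ℝ => ((1:ℂ) - 2*I*x) := by continuity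
lemma continuous_1m : Continuous fun x : ℝ => ((1:ℂ) - I*x) := by continuity
lemma continuous_1p : Continuous fun x : ℝ => ((1:ℂ) + I*x) := by continuity

lemma continuous_r : Continuous r := continuous_w'.div continuous_w hw

lemma sqrt_key (x : ℝ) : 1 + x^2 ≤ Real.sqrt (1+x^2) * Real.sqrt (1+4*x^2) := by
  have h1 : Real.sqrt (1+x^2) * Real.sqrt (1+x^2) = 1+x^2 := Real.mul_self_sqrt (by positivity)
  calc 1+x^2 = Real.sqrt (1+x^2) * Real.sqrt (1+x^2) := h1.symm
    _ ≤ Real.sqrt (1+x^2) * Real.sqrt (1+4*x^2) := by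
        gcongr
        nlinarith [sq_nonneg x]

lemma integrable_aux {f : ℝ → ℂ} (hc : Continuous f) (hb : ∀ x, ‖f x‖ ≤ 1/(1+x^2)) :
    Integrable f := by
  refine (integrable_inv_one_add_sq).mono' hc.aestronglyMeasurable ?_
  filter_upwards with x
  simpa [one_div] using hb x

lemma integrable_s (m : ℕ) : Integrable (s m) := by
  refine integrable_aux ?_ ?_
  · exact (continuous_r.pow m).div (continuous_1m.mul continuous_w)
      (fun x => mul_ne_zero (h1m x) (hw x))
  · intro x
    rw [s, norm_div, norm_pow, norm_r, one_pow, norm_mul, norm_1m, norm_w]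
    rw [div_le_div_iff₀ (by positivity) (by positivity)]
    simpa using sqrt_key x

lemma integrable_t (m : ℕ) : Integrable (t m) := by
  refine integrable_aux ?_ ?_
  · exact (continuous_r.pow m).div (continuous_1p.mul continuous_w)
      (fun x => mul_ne_zero (h1p x) (hw x))
  · intro x
    rw [t, norm_div, norm_pow, norm_r, one_pow, norm_mul, norm_1p, norm_w]
    rw [div_le_div_iff₀ (by positivity) (by positivity)]
    simpa using sqrt_key x

lemma integrable_c (m : ℕ) : Integrable (c m) := by
  refine integrable_aux ?_ ?_
  · exact (continuous_r.pow m).div (continuous_w.pow 2)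
      (fun x => pow_ne_zero _ (hw x))
  · intro x
    rw [c, norm_div, norm_pow, norm_r, one_pow, norm_pow, norm_w,
      Real.sq_sqrt (by positivity)]
    rw [div_le_div_iff₀ (by positivity) (by positivity)]
    nlinarith [sq_nonneg x]


lemma hasDerivAt_coe (x : ℝ) : HasDerivAt (fun y : ℝ => (y:ℂ)) 1 x :=
  (hasDerivAt_id x).ofReal_comp

lemma hasDerivAt_w (x : ℝ) : HasDerivAt (fun y : ℝ => ((1:ℂ) + 2*I*y)) (2*I) x := by
  simpa using (((hasDerivAt_coe x).const_mul (2*I)).const_add 1)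

lemma hasDerivAt_w' (x : ℝ) : HasDerivAt (fun y : ℝ => ((1:ℂ) - 2*I*y)) (-(2*I)) x := by
  simpa using (((hasDerivAt_coe x).const_mul (2*I)).const_sub 1)

lemma hasDerivAt_r (x : ℝ) : HasDerivAt r (-4*I/(1+2*I*x)^2) x := by
  have h := (hasDerivAt_w' x).div (hasDerivAt_w x) (hw x)
  refine h.congr_deriv (Eq.symm ?_)
  congr 1
  ring

lemma h2I : ((0:ℂ) + 2*I) ≠ 0 := by simpa using Complex.I_ne_zero

lemma tendsto_r_aux {l : Filter ℝ} (hl : Tendsto (fun x : ℝ => x⁻¹) l (𝓝 0))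
    (hne : ∀ᶠ x : ℝ in l, x ≠ 0) : Tendsto r l (𝓝 (-1)) := by
  have h0 : Tendsto (fun x : ℝ => ((x:ℂ))⁻¹) l (𝓝 0) := by
    have := (Complex.continuous_ofReal.tendsto 0).comp hl
    simpa [Function.comp_def, Complex.ofReal_inv] using this
  have h : Tendsto (fun x : ℝ => (((x:ℂ))⁻¹ - 2*I)/(((x:ℂ))⁻¹ + 2*I)) l
      (𝓝 ((0 - 2*I)/(0 + 2*I))) :=
    Tendsto.div (h0.sub tendsto_const_nhds) (h0.add tendsto_const_nhds) h2I
  have hval : ((0:ℂ) - 2*I)/(0 + 2*I) = -1 := by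
    rw [div_eq_iff h2I]; ring
  rw [hval] at h
  refine h.congr' ?_
  filter_upwards [hne] with x hx
  have hx' : ((x:ℂ)) ≠ 0 := by exact_mod_cast hx
  have e1 : ((1:ℂ) - 2*I*x) = x * (((x:ℂ))⁻¹ - 2*I) := by
    field_simp
  have e2 : ((1:ℂ) + 2*I*x) = x * (((x:ℂ))⁻¹ + 2*I) := by
    field_simp
  simp only [r]
  rw [e1, e2, mul_div_mul_left _ _ hx']

lemma tendsto_r_top : Tendsto r atTop (𝓝 (-1)) :=
  tendsto_r_aux tendsto_inv_atTop_zero (eventually_gt_atTop 0 |>.mono fun _ h => h.ne')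

lemma tendsto_inv_atBot_zero'' : Tendsto (fun x : ℝ => x⁻¹) atBot (𝓝 0) := by
  have h1 : Tendsto (fun x : ℝ => (-x)) atBot atTop := tendsto_neg_atBot_atTop
  have h2 : Tendsto (fun x : ℝ => (-x)⁻¹) atBot (𝓝 0) := tendsto_inv_atTop_zero.comp h1
  have h3 := h2.neg
  simpa [inv_neg] using h3

lemma tendsto_r_bot : Tendsto r atBot (𝓝 (-1)) :=
  tendsto_r_aux tendsto_inv_atBot_zero'' (eventually_lt_atBot 0 |>.mono fun _ h => h.ne)


lemma hasDerivAt_rpow (m : ℕ) (x : ℝ) :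
    HasDerivAt (fun y => r y ^ (m+1)) (((m:ℂ)+1) * r x ^ m * (-4*I/(1+2*I*x)^2)) x := by
  induction m with
  | zero => simpa using hasDerivAt_r x
  | succ m ih =>
    have h := ih.mul (hasDerivAt_r x)
    have hf : (fun y => r y ^ (m+1)) * r = fun y => r y ^ (m+1+1) := by
      funext y; exact (pow_succ _ _).symm
    rw [hf] at h
    refine h.congr_deriv (Eq.symm ?_)
    push_cast
    ring

lemma integral_c (m : ℕ) : ∫ x : ℝ, c m x = 0 := by
  have hm : ((m:ℂ)+1) ≠ 0 := by
    have := (Nat.cast_ne_zero (R := ℂ)).mpr (Nat.succ_ne_zero m)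
    push_cast at this
    exact this
  have hA : ∀ x : ℝ, HasDerivAt (fun y : ℝ => (I/(4*((m:ℂ)+1))) * r y ^ (m+1)) (c m x) x := by
    intro x
    have h := (hasDerivAt_rpow m x).const_mul (I/(4*((m:ℂ)+1)))
    refine h.congr_deriv (Eq.symm ?_)
    simp only [c]
    have hp : ((1:ℂ)+2*I*x)^2 ≠ 0 := pow_ne_zero _ (hw x)
    field_simp
    ring_nf
    simp only [Complex.I_sq, hI3, hI4]
    try ring
  have htop : Tendsto (fun y : ℝ => (I/(4*((m:ℂ)+1))) * r y ^ (m+1)) atTop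
      (𝓝 ((I/(4*((m:ℂ)+1))) * (-1)^(m+1))) :=
    (tendsto_r_top.pow (m+1)).const_mul _
  have hbot : Tendsto (fun y : ℝ => (I/(4*((m:ℂ)+1))) * r y ^ (m+1)) atBot
      (𝓝 ((I/(4*((m:ℂ)+1))) * (-1)^(m+1))) :=
    (tendsto_r_bot.pow (m+1)).const_mul _
  have := integral_of_hasDerivAt_of_tendsto hA (integrable_c m) hbot htop
  simpa using this

/-- real antiderivative pieces -/
noncomputable def F1 (x : ℝ) : ℝ := Real.arctan x + Real.arctan (2*x)
noncomputable def G1 (x : ℝ) : ℝ := Real.arctan (2*x) - Real.arctan x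
noncomputable def F2 (x : ℝ) : ℝ := Real.log (1+x^2) - Real.log (1+4*x^2)

lemma hasDerivAt_arctan2 (x : ℝ) : HasDerivAt (fun y : ℝ => Real.arctan (2*y))
    (1/(1+(2*x)^2) * 2) x := by
  have hi : HasDerivAt (fun y : ℝ => 2*y) 2 x := by
    simpa using (hasDerivAt_id x).const_mul 2
  simpa [Function.comp_def] using (Real.hasDerivAt_arctan (2*x)).comp x hi

lemma hasDerivAt_F1 (x : ℝ) : HasDerivAt F1 (1/(1+x^2) + 1/(1+(2*x)^2) * 2) x :=
  (Real.hasDerivAt_arctan x).add (hasDerivAt_arctan2 x)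

lemma hasDerivAt_G1 (x : ℝ) : HasDerivAt G1 (1/(1+(2*x)^2) * 2 - 1/(1+x^2)) x :=
  (hasDerivAt_arctan2 x).sub (Real.hasDerivAt_arctan x)

lemma hasDerivAt_F2 (x : ℝ) : HasDerivAt F2 ((1+x^2)⁻¹ * (2*x) - (1+4*x^2)⁻¹ * (8*x)) x := by
  have i1 : HasDerivAt (fun y : ℝ => 1+y^2) (2*x) x := by
    simpa using ((hasDerivAt_pow 2 x).const_add 1)
  have i2 : HasDerivAt (fun y : ℝ => 1+4*y^2) (8*x) x := by
    have := (((hasDerivAt_pow 2 x).const_mul 4).const_add 1)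
    refine this.congr_deriv (Eq.symm ?_)
    simp; ring
  exact ((Real.hasDerivAt_log (by positivity)).comp x i1).sub
    ((Real.hasDerivAt_log (by positivity)).comp x i2)

lemma tendsto_mul2_atTop : Tendsto (fun x : ℝ => 2*x) atTop atTop := by
  exact tendsto_id.const_mul_atTop (by norm_num)

lemma tendsto_mul2_atBot : Tendsto (fun x : ℝ => 2*x) atBot atBot := by
  exact tendsto_id.const_mul_atBot (by norm_num)

lemma tendsto_F1_top : Tendsto F1 atTop (𝓝 (π/2 + π/2)) :=
  (tendsto_nhds_of_tendsto_nhdsWithin tendsto_arctan_atTop).add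
    ((tendsto_nhds_of_tendsto_nhdsWithin tendsto_arctan_atTop).comp tendsto_mul2_atTop)

lemma tendsto_F1_bot : Tendsto F1 atBot (𝓝 (-(π/2) + -(π/2))) :=
  (tendsto_nhds_of_tendsto_nhdsWithin tendsto_arctan_atBot).add
    ((tendsto_nhds_of_tendsto_nhdsWithin tendsto_arctan_atBot).comp tendsto_mul2_atBot)

lemma tendsto_G1_top : Tendsto G1 atTop (𝓝 (π/2 - π/2)) :=
  ((tendsto_nhds_of_tendsto_nhdsWithin tendsto_arctan_atTop).comp tendsto_mul2_atTop).sub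
    (tendsto_nhds_of_tendsto_nhdsWithin tendsto_arctan_atTop)

lemma tendsto_G1_bot : Tendsto G1 atBot (𝓝 (-(π/2) - -(π/2))) :=
  ((tendsto_nhds_of_tendsto_nhdsWithin tendsto_arctan_atBot).comp tendsto_mul2_atBot).sub
    (tendsto_nhds_of_tendsto_nhdsWithin tendsto_arctan_atBot)

lemma tendsto_ratio_aux {l : Filter ℝ} (hl : Tendsto (fun x : ℝ => x⁻¹) l (𝓝 0))
    (hne : ∀ᶠ x : ℝ in l, x ≠ 0) :
    Tendsto (fun x : ℝ => (1+x^2)/(1+4*x^2)) l (𝓝 (4⁻¹ : ℝ)) := by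
  have hsq : Tendsto (fun x : ℝ => (x⁻¹)^2) l (𝓝 0) := by
    simpa using hl.pow 2
  have h : Tendsto (fun x : ℝ => ((x⁻¹)^2 + 1)/((x⁻¹)^2 + 4)) l (𝓝 ((0+1)/(0+4))) :=
    (hsq.add_const 1).div (hsq.add_const 4) (by norm_num)
  have h4 : ((0:ℝ)+1)/(0+4) = 4⁻¹ := by norm_num
  rw [h4] at h
  refine h.congr' ?_
  filter_upwards [hne] with x hx
  have hx2 : x^2 ≠ 0 := pow_ne_zero _ hx
  field_simp
  try ring

lemma tendsto_F2 {l : Filter ℝ} (hl : Tendsto (fun x : ℝ => x⁻¹) l (𝓝 0))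
    (hne : ∀ᶠ x : ℝ in l, x ≠ 0) : Tendsto F2 l (𝓝 (Real.log 4⁻¹)) := by
  have h := ((Real.continuousAt_log (by norm_num : (4⁻¹:ℝ) ≠ 0)).tendsto).comp
    (tendsto_ratio_aux hl hne)
  refine h.congr fun x => ?_
  simp only [Function.comp_apply, F2]
  rw [Real.log_div (by positivity) (by positivity)]

lemma tendsto_F2_top : Tendsto F2 atTop (𝓝 (Real.log 4⁻¹)) :=
  tendsto_F2 tendsto_inv_atTop_zero (eventually_gt_atTop 0 |>.mono fun _ h => h.ne')

lemma tendsto_F2_bot : Tendsto F2 atBot (𝓝 (Real.log 4⁻¹)) :=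
  tendsto_F2 tendsto_inv_atBot_zero'' (eventually_lt_atBot 0 |>.mono fun _ h => h.ne)

lemma k0 (x : ℝ) : ((1:ℂ)) + (x:ℂ)^2 = (1 - I*x)*(1+I*x) := by
  linear_combination ((x:ℂ)^2) * Complex.I_sq

lemma k4 (x : ℝ) : ((1:ℂ)) + 4*(x:ℂ)^2 = (1 - 2*I*x)*(1+2*I*x) := by
  linear_combination (4*(x:ℂ)^2) * Complex.I_sq

lemma integral_s0 : ∫ x : ℝ, s 0 x = 2*π/3 := by
  have hA : ∀ x : ℝ, HasDerivAt
      (fun y : ℝ => (1/3:ℂ) * (F1 y : ℂ) + (I/6) * (F2 y : ℂ)) (s 0 x) x := by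
    intro x
    have h := (((hasDerivAt_F1 x).ofReal_comp).const_mul (1/3:ℂ)).add
      (((hasDerivAt_F2 x).ofReal_comp).const_mul (I/6))
    refine h.congr_deriv (Eq.symm ?_)
    simp only [s, pow_zero]
    rw [div_eq_iff (mul_ne_zero (h1m x) (hw x))]
    push_cast
    have e0 : ((1:ℂ) + (x:ℂ)^2) ≠ 0 := by rw [k0]; exact mul_ne_zero (h1m x) (h1p x)
    have e4 : ((1:ℂ) + 4*(x:ℂ)^2) ≠ 0 := by rw [k4]; exact mul_ne_zero (hw' x) (hw x)
    have e4b : ((1:ℂ) + (2*(x:ℂ))^2) ≠ 0 := by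
      rw [show ((1:ℂ)+(2*(x:ℂ))^2) = 1+4*(x:ℂ)^2 by ring, k4]
      exact mul_ne_zero (hw' x) (hw x)
    have e4c : ((1:ℂ) + (x:ℂ)^2*4) ≠ 0 := by convert e4 using 1; ring
    have e4d : ((1:ℂ) + (x:ℂ)^2*2^2) ≠ 0 := by convert e4 using 1; ring
    have e4e : ((1:ℂ) + 2^2*(x:ℂ)^2) ≠ 0 := by convert e4 using 1; ring
    field_simp [e0, e4, e4b, e4c, e4d, e4e]
    ring_nf
    simp only [Complex.I_sq, hI3, hI4]
    try ring
  have htop : Tendsto (fun y : ℝ => (1/3:ℂ) * (F1 y : ℂ) + (I/6) * (F2 y : ℂ)) atTop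
      (𝓝 ((1/3:ℂ) * ((π/2 + π/2 : ℝ) : ℂ) + (I/6) * ((Real.log 4⁻¹ : ℝ) : ℂ))) :=
    (((Complex.continuous_ofReal.tendsto _).comp tendsto_F1_top).const_mul _).add
      (((Complex.continuous_ofReal.tendsto _).comp tendsto_F2_top).const_mul _)
  have hbot : Tendsto (fun y : ℝ => (1/3:ℂ) * (F1 y : ℂ) + (I/6) * (F2 y : ℂ)) atBot
      (𝓝 ((1/3:ℂ) * ((-(π/2) + -(π/2) : ℝ) : ℂ) + (I/6) * ((Real.log 4⁻¹ : ℝ) : ℂ))) :=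
    (((Complex.continuous_ofReal.tendsto _).comp tendsto_F1_bot).const_mul _).add
      (((Complex.continuous_ofReal.tendsto _).comp tendsto_F2_bot).const_mul _)
  rw [integral_of_hasDerivAt_of_tendsto hA (integrable_s 0) hbot htop]
  push_cast
  try ring

lemma integral_t0 : ∫ x : ℝ, t 0 x = 0 := by
  have hA : ∀ x : ℝ, HasDerivAt
      (fun y : ℝ => ((G1 y : ℂ)) + (I/2) * (F2 y : ℂ)) (t 0 x) x := by
    intro x
    have h := ((hasDerivAt_G1 x).ofReal_comp).add
      (((hasDerivAt_F2 x).ofReal_comp).const_mul (I/2))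
    refine h.congr_deriv (Eq.symm ?_)
    simp only [t, pow_zero]
    rw [div_eq_iff (mul_ne_zero (h1p x) (hw x))]
    push_cast
    have e0 : ((1:ℂ) + (x:ℂ)^2) ≠ 0 := by rw [k0]; exact mul_ne_zero (h1m x) (h1p x)
    have e4 : ((1:ℂ) + 4*(x:ℂ)^2) ≠ 0 := by rw [k4]; exact mul_ne_zero (hw' x) (hw x)
    have e4b : ((1:ℂ) + (2*(x:ℂ))^2) ≠ 0 := by
      rw [show ((1:ℂ)+(2*(x:ℂ))^2) = 1+4*(x:ℂ)^2 by ring, k4]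
      exact mul_ne_zero (hw' x) (hw x)
    have e4c : ((1:ℂ) + (x:ℂ)^2*4) ≠ 0 := by convert e4 using 1; ring
    have e4d : ((1:ℂ) + (x:ℂ)^2*2^2) ≠ 0 := by convert e4 using 1; ring
    have e4e : ((1:ℂ) + 2^2*(x:ℂ)^2) ≠ 0 := by convert e4 using 1; ring
    field_simp [e0, e4, e4b, e4c, e4d, e4e]
    ring_nf
    simp only [Complex.I_sq, hI3, hI4]
    try ring
  have htop : Tendsto (fun y : ℝ => ((G1 y : ℂ)) + (I/2) * (F2 y : ℂ)) atTop
      (𝓝 (((π/2 - π/2 : ℝ) : ℂ) + (I/2) * ((Real.log 4⁻¹ : ℝ) : ℂ))) :=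
    ((Complex.continuous_ofReal.tendsto _).comp tendsto_G1_top).add
      (((Complex.continuous_ofReal.tendsto _).comp tendsto_F2_top).const_mul _)
  have hbot : Tendsto (fun y : ℝ => ((G1 y : ℂ)) + (I/2) * (F2 y : ℂ)) atBot
      (𝓝 (((-(π/2) - -(π/2) : ℝ) : ℂ) + (I/2) * ((Real.log 4⁻¹ : ℝ) : ℂ))) :=
    ((Complex.continuous_ofReal.tendsto _).comp tendsto_G1_bot).add
      (((Complex.continuous_ofReal.tendsto _).comp tendsto_F2_bot).const_mul _)
  rw [integral_of_hasDerivAt_of_tendsto hA (integrable_t 0) hbot htop]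
  push_cast
  try ring

lemma s_rec (m : ℕ) (x : ℝ) : s (m+1) x = (4/3) * c m x - (1/3) * s m x := by
  rw [s_eq, s_eq, c_eq]
  field_simp [h1m x, hw x, hw' x]
  ring

lemma t_rec (m : ℕ) (x : ℝ) : t (m+1) x = 4 * c m x - 3 * t m x := by
  rw [t_eq, t_eq, c_eq]
  field_simp [h1p x, hw x, hw' x]
  ring

lemma integral_s (m : ℕ) : ∫ x : ℝ, s m x = 2*π/3 * (-1/3)^m := by
  induction m with
  | zero => simpa using integral_s0
  | succ m ih =>
    have : ∫ x : ℝ, s (m+1) x = ∫ x : ℝ, ((4/3) * c m x - (1/3) * s m x) := by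
      congr 1; funext x; exact s_rec m x
    rw [this, integral_sub ((integrable_c m).const_mul _) ((integrable_s m).const_mul _),
      integral_const_mul, integral_const_mul, integral_c, ih]
    ring

lemma integral_t (m : ℕ) : ∫ x : ℝ, t m x = 0 := by
  induction m with
  | zero => exact integral_t0
  | succ m ih =>
    have : ∫ x : ℝ, t (m+1) x = ∫ x : ℝ, (4 * c m x - 3 * t m x) := by
      congr 1; funext x; exact t_rec m x
    rw [this, integral_sub ((integrable_c m).const_mul _) ((integrable_t m).const_mul _),
      integral_const_mul, integral_const_mul, integral_c, ih]
    ring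

lemma conj_MT (n : ℕ) (x : ℝ) :
    (starRingEnd ℂ) (MT (n : ℤ) x)
      = (Real.sqrt (2/Real.pi) : ℂ) * (-I)^n * (1 - 2*I*x)^n / (1 + 2*I*x)^(n+1) := by
  simp only [MT]
  rw [show ((n:ℤ)+1) = ((n+1 : ℕ) : ℤ) by push_cast; ring]
  rw [zpow_natCast, zpow_natCast, zpow_natCast]
  rw [map_div₀, map_mul, map_mul, map_pow, map_pow, map_pow]
  simp only [map_add, map_sub, map_one, map_mul, Complex.conj_I, Complex.conj_ofReal,
    map_ofNat]
  ring

lemma main_eq (n : ℕ) (x : ℝ) :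
    (1 / (1 + (x:ℂ)^2)) * (starRingEnd ℂ) (MT (n:ℤ) x)
      = ((Real.sqrt (2/Real.pi) : ℂ) * (-I)^n * (1/2)) * (s n x + t n x) := by
  have frac : (1/(((1:ℂ)-I*x)*(1+I*x))) * ((1-2*I*x)^n / (1+2*I*x)^(n+1))
      = (1/2) * ((1-2*I*x)^n/((1-I*x)*(1+2*I*x)^(n+1))
        + (1-2*I*x)^n/((1+I*x)*(1+2*I*x)^(n+1))) := by
    field_simp [h1m x, h1p x, hw x, hw' x]
    ring
  rw [conj_MT, k0, s_eq, t_eq]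
  linear_combination ((Real.sqrt (2/Real.pi) : ℂ) * (-Complex.I)^n) * frac

end MTaux

open MTaux in
theorem MT_coeff_of_cauchy (n : ℕ) :
    ∫ x : ℝ, (1 / (1 + (x : ℂ) ^ 2)) * (starRingEnd ℂ) (MT (n : ℤ) x)
      = (Real.sqrt (2 * Real.pi) : ℂ) * I ^ n * (3 : ℂ)⁻¹ ^ (n + 1) := by
  have h1 : (fun x : ℝ => (1 / (1 + (x : ℂ) ^ 2)) * (starRingEnd ℂ) (MT (n : ℤ) x))
      = fun x : ℝ => ((Real.sqrt (2/Real.pi) : ℂ) * (-I)^n * (1/2)) * (s n x + t n x) := by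
    funext x; exact main_eq n x
  rw [h1, integral_const_mul, integral_add (integrable_s n) (integrable_t n),
    integral_s, integral_t, add_zero]
  have hs : Real.sqrt (2/Real.pi) * Real.pi = Real.sqrt (2*Real.pi) := by
    have h2 : (2/Real.pi) * Real.pi^2 = 2*Real.pi := by
      field_simp
      try ring
    rw [← h2, Real.sqrt_mul (by positivity), Real.sqrt_sq Real.pi_pos.le]
  have hs' : ((Real.sqrt (2*Real.pi) : ℝ) : ℂ) = (Real.sqrt (2/Real.pi) : ℂ) * (Real.pi : ℂ) := by
    rw [← hs]; push_cast; ring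
  have hp : ((-1:ℂ))^n * ((-1/3:ℂ))^n = ((1/3:ℂ))^n := by
    rw [← mul_pow]
    norm_num
  rw [hs', pow_succ]
  push_cast
  linear_combination (((Real.sqrt (2/Real.pi) : ℝ):ℂ) * Complex.I^n * (Real.pi:ℂ) * (1/3)) * hp
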